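/- Union of limit sets: Let K be a valued field and X₁, X₂ ⊆ K^n × K^m with projections to K^n both equal to Z ⊆ K^n, and a ∈ K^n. If L₁ is a closed minimal limit set of X₁ at a and L₂ is a closed minimal limit set of X₂ at a (in the sense that every element of each Lᵢ is isolated in Lᵢ, each Lᵢ is closed in the valuation topology, and Lᵢ is a limit set of Xᵢ at a but no proper subset is), then L₁ ∪ L₂ is a closed minimal limit set of X₁ ∪ X₂ at a. -/

import Mathlib

/-- The open polyball around `c` of radius `ε` in `K^m`. -/
def polyball {K Γ : Type*} [Field K] [AddCommGroup Γ] [LinearOrder Γ] [IsOrderedAddMonoid Γ]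
    (v : K → WithTop Γ) {m : ℕ} (c : Fin m → K) (ε : Γ) : Set (Fin m → K) :=
  {y | ∀ j, (ε : WithTop Γ) < v (y j - c j)}

/-- The valuation topology on `K^m`, generated by the open polyballs. -/
def valTopology {K Γ : Type*} [Field K] [AddCommGroup Γ] [LinearOrder Γ] [IsOrderedAddMonoid Γ]
    (v : K → WithTop Γ) (m : ℕ) : TopologicalSpace (Fin m → K) :=
  TopologicalSpace.generateFrom {S | ∃ c ε, S = polyball v c ε}

/-- `L ⊆ K^m` is a limit set of `X ⊆ K^n × K^m` at `a ∈ K^n`. -/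
def IsLimitSet {K Γ : Type*} [Field K] [AddCommGroup Γ] [LinearOrder Γ] [IsOrderedAddMonoid Γ]
    (v : K → WithTop Γ) {n m : ℕ}
    (X : Set ((Fin n → K) × (Fin m → K))) (a : Fin n → K)
    (L : Set (Fin m → K)) : Prop :=
  ∀ ε : Γ, ∃ δ : Γ, ∀ c : Fin n → K,
    c ∈ polyball v a δ → c ≠ a → c ∈ Prod.fst '' X →
      ∃ L' ⊆ L, {b | (c, b) ∈ X} ⊆ ⋃ d ∈ L', polyball v d ε

section Aux

variable {K Γ : Type*} [Field K] [AddCommGroup Γ] [LinearOrder Γ] [IsOrderedAddMonoid Γ]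

lemma polyball_mono (v : K → WithTop Γ) {m : ℕ} (c : Fin m → K) {ε ε' : Γ}
    (h : ε ≤ ε') : polyball v c ε' ⊆ polyball v c ε := fun y hy j =>
  lt_of_le_of_lt (WithTop.coe_le_coe.mpr h) (hy j)

lemma polyball_trans (v : K → WithTop Γ)
    (hadd : ∀ x y : K, min (v x) (v y) ≤ v (x + y)) {m : ℕ}
    {c x : Fin m → K} {ε : Γ} (hx : x ∈ polyball v c ε) :
    polyball v x ε ⊆ polyball v c ε := by
  intro y hy j
  have : y j - c j = (y j - x j) + (x j - c j) := by ring
  rw [this]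
  exact lt_of_lt_of_le (lt_min (hy j) (hx j)) (hadd _ _)

lemma mem_polyball_symm_trans (v : K → WithTop Γ)
    (hadd : ∀ x y : K, min (v x) (v y) ≤ v (x + y))
    (hneg : ∀ x : K, v (-x) = v x) {m : ℕ}
    {b e x : Fin m → K} {ε : Γ} (hx : x ∈ polyball v b ε)
    (hx' : x ∈ polyball v e ε) : e ∈ polyball v b ε := by
  intro j
  have h1 : (ε : WithTop Γ) < v (e j - x j) := by
    have : e j - x j = -(x j - e j) := by ring
    rw [this, hneg]; exact hx' j
  have : e j - b j = (e j - x j) + (x j - b j) := by ring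
  rw [this]
  exact lt_of_lt_of_le (lt_min h1 (hx j)) (hadd _ _)

lemma exists_ball_subset (v : K → WithTop Γ)
    (hadd : ∀ x y : K, min (v x) (v y) ≤ v (x + y)) {m : ℕ}
    {U : Set (Fin m → K)}
    (hU : TopologicalSpace.GenerateOpen {S | ∃ c ε, S = polyball v c ε} U) :
    ∀ b ∈ U, ∃ ρ : Γ, polyball v b ρ ⊆ U := by
  induction hU with
  | basic S hS =>
    rintro b hb
    obtain ⟨c, ε, rfl⟩ := hS
    exact ⟨ε, polyball_trans v hadd hb⟩
  | univ => exact fun b _ => ⟨0, Set.subset_univ _⟩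
  | inter U V hU hV ihU ihV =>
    intro b hb
    obtain ⟨ρ₁, h1⟩ := ihU b hb.1
    obtain ⟨ρ₂, h2⟩ := ihV b hb.2
    exact ⟨max ρ₁ ρ₂, fun y hy =>
      ⟨h1 (polyball_mono v b (le_max_left _ _) hy),
       h2 (polyball_mono v b (le_max_right _ _) hy)⟩⟩
  | sUnion S hS ih =>
    intro b hb
    obtain ⟨U, hUS, hbU⟩ := hb
    obtain ⟨ρ, h⟩ := ih U hUS b hbU
    exact ⟨ρ, fun y hy => ⟨U, hUS, h hy⟩⟩

lemma isLimitSet_mono (v : K → WithTop Γ) {n m : ℕ}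
    {X X' : Set ((Fin n → K) × (Fin m → K))} {a : Fin n → K}
    {L : Set (Fin m → K)} (hXX : X ⊆ X') (hL : IsLimitSet v X' a L) :
    IsLimitSet v X a L := by
  intro ε
  obtain ⟨δ, hδ⟩ := hL ε
  refine ⟨δ, fun c hc hca hcZ => ?_⟩
  obtain ⟨L', hL', hcov⟩ := hδ c hc hca (Set.image_mono hXX hcZ)
  exact ⟨L', hL', fun x hx => hcov (hXX hx)⟩

/-- Core contradiction: if `L'` is a limit set of `X₁` at `a` contained in
`L₁ ∪ L₂` and `b ∈ L₁ \ L'`, we get a contradiction. -/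
lemma aux_contradiction (v : K → WithTop Γ)
    (hadd : ∀ x y : K, min (v x) (v y) ≤ v (x + y))
    (hneg : ∀ x : K, v (-x) = v x)
    {n m : ℕ} (X₁ : Set ((Fin n → K) × (Fin m → K))) (a : Fin n → K)
    (L₁ L₂ L' : Set (Fin m → K))
    (h₂closed : @IsClosed _ (valTopology v m) L₂)
    (h₁iso : ∀ b ∈ L₁, ∃ ε : Γ, ∀ y ∈ L₁, y ∈ polyball v b ε → y = b)
    (h₂iso : ∀ b ∈ L₂, ∃ ε : Γ, ∀ y ∈ L₂, y ∈ polyball v b ε → y = b)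
    (h₁ : IsLimitSet v X₁ a L₁) (h₁min : ∀ L'' ⊂ L₁, ¬ IsLimitSet v X₁ a L'')
    (hL' : IsLimitSet v X₁ a L') (hL'sub : L' ⊆ L₁ ∪ L₂)
    (b : Fin m → K) (hb : b ∈ L₁) (hbL' : b ∉ L') : False := by
  -- isolation radius of b in L₁
  obtain ⟨ε₁, hε₁⟩ := h₁iso b hb
  -- a radius around b within which any element of L₂ equals b
  have hρ₂ : ∃ ρ₂ : Γ, ∀ e ∈ L₂, e ∈ polyball v b ρ₂ → e = b := by
    by_cases hbL₂ : b ∈ L₂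
    · exact h₂iso b hbL₂
    · have hopen : TopologicalSpace.GenerateOpen
          {S | ∃ c ε, S = polyball v c ε} L₂ᶜ := h₂closed.isOpen_compl
      obtain ⟨ρ, hρ⟩ := exists_ball_subset v hadd hopen b hbL₂
      exact ⟨ρ, fun e he hball => absurd he (hρ hball)⟩
  obtain ⟨ρ₂, hρ₂⟩ := hρ₂
  -- L₁ \ {b} is not a limit set of X₁
  have hnot : ¬ IsLimitSet v X₁ a (L₁ \ {b}) :=
    h₁min _ (Set.sdiff_singleton_ssubset.mpr hb)
  unfold IsLimitSet at hnot
  push_neg at hnot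
  obtain ⟨ε₀, hε₀⟩ := hnot
  set ρ : Γ := max ε₀ (max ε₁ ρ₂) with hρdef
  obtain ⟨δ₁, hδ₁⟩ := h₁ ρ
  obtain ⟨δ', hδ'⟩ := hL' ρ
  obtain ⟨c, hc, hca, hcZ, hbad⟩ := hε₀ (max δ₁ δ')
  obtain ⟨L₁', hL₁'sub, hcov₁⟩ :=
    hδ₁ c (polyball_mono v a (le_max_left _ _) hc) hca hcZ
  obtain ⟨L'', hL''sub, hcov'⟩ :=
    hδ' c (polyball_mono v a (le_max_right _ _) hc) hca hcZ
  have hsub : L₁' \ {b} ⊆ L₁ \ {b} := Set.diff_subset_diff_left hL₁'sub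
  obtain ⟨x, hx, hxnot⟩ := Set.not_subset.mp (hbad _ hsub)
  -- x lies in the ball of radius ρ around b
  have hxb : x ∈ polyball v b ρ := by
    obtain ⟨d, hd, hxd⟩ := Set.mem_iUnion₂.mp (hcov₁ hx)
    by_cases hdb : d = b
    · exact hdb ▸ hxd
    · exact absurd (Set.mem_iUnion₂.mpr ⟨d, ⟨hd, hdb⟩,
        polyball_mono v d (le_max_left _ _) hxd⟩) hxnot
  -- x lies in the ball of radius ρ around some e ∈ L'
  obtain ⟨e, he, hxe⟩ := Set.mem_iUnion₂.mp (hcov' hx)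
  have heL' : e ∈ L' := hL''sub he
  have heb : e ∈ polyball v b ρ := mem_polyball_symm_trans v hadd hneg hxb hxe
  have hne : e ≠ b := fun h => hbL' (h ▸ heL')
  rcases hL'sub heL' with heL₁ | heL₂
  · exact hne (hε₁ e heL₁
      (polyball_mono v b (le_trans (le_max_left _ _) (le_max_right _ _)) heb))
  · exact hne (hρ₂ e heL₂
      (polyball_mono v b (le_trans (le_max_right _ _) (le_max_right _ _)) heb))

end Aux

/-- the union of two closed minimal limit sets (all of whose
points are isolated) of `X₁` and `X₂` at `a` is a closed minimal limit set of
`X₁ ∪ X₂` at `a`, provided `X₁` and `X₂` have the same projection `Z`. -/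
theorem union_of_minimal_limit_sets
    {K Γ : Type*} [Field K] [AddCommGroup Γ] [LinearOrder Γ] [IsOrderedAddMonoid Γ]
    (v : K → WithTop Γ)
    (hadd : ∀ x y : K, min (v x) (v y) ≤ v (x + y))
    (hneg : ∀ x : K, v (-x) = v x)
    {n m : ℕ} (X₁ X₂ : Set ((Fin n → K) × (Fin m → K)))
    (Z : Set (Fin n → K)) (a : Fin n → K)
    (hZ₁ : Prod.fst '' X₁ = Z) (hZ₂ : Prod.fst '' X₂ = Z)
    (L₁ L₂ : Set (Fin m → K))
    (h₁closed : @IsClosed _ (valTopology v m) L₁)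
    (h₂closed : @IsClosed _ (valTopology v m) L₂)
    (h₁iso : ∀ b ∈ L₁, ∃ ε : Γ, ∀ y ∈ L₁, y ∈ polyball v b ε → y = b)
    (h₂iso : ∀ b ∈ L₂, ∃ ε : Γ, ∀ y ∈ L₂, y ∈ polyball v b ε → y = b)
    (h₁ : IsLimitSet v X₁ a L₁) (h₁min : ∀ L' ⊂ L₁, ¬ IsLimitSet v X₁ a L')
    (h₂ : IsLimitSet v X₂ a L₂) (h₂min : ∀ L' ⊂ L₂, ¬ IsLimitSet v X₂ a L') :
    IsLimitSet v (X₁ ∪ X₂) a (L₁ ∪ L₂)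
      ∧ (∀ L' ⊂ L₁ ∪ L₂, ¬ IsLimitSet v (X₁ ∪ X₂) a L')
      ∧ @IsClosed _ (valTopology v m) (L₁ ∪ L₂) := by
  have himg : Prod.fst '' (X₁ ∪ X₂) = Z := by
    rw [Set.image_union, hZ₁, hZ₂, Set.union_self]
  refine ⟨?_, ?_, ?_⟩
  · -- L₁ ∪ L₂ is a limit set of X₁ ∪ X₂
    intro ε
    obtain ⟨δ₁, hδ₁⟩ := h₁ ε
    obtain ⟨δ₂, hδ₂⟩ := h₂ ε
    refine ⟨max δ₁ δ₂, fun c hc hca hcZ => ?_⟩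
    have hc1 : c ∈ Prod.fst '' X₁ := by rw [hZ₁, ← himg]; exact hcZ
    have hc2 : c ∈ Prod.fst '' X₂ := by rw [hZ₂, ← himg]; exact hcZ
    obtain ⟨A, hA, hcovA⟩ :=
      hδ₁ c (polyball_mono v a (le_max_left _ _) hc) hca hc1
    obtain ⟨B, hB, hcovB⟩ :=
      hδ₂ c (polyball_mono v a (le_max_right _ _) hc) hca hc2
    refine ⟨A ∪ B, Set.union_subset_union hA hB, fun x hx => ?_⟩
    rcases hx with hx | hx
    · obtain ⟨d, hd, hxd⟩ := Set.mem_iUnion₂.mp (hcovA hx)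
      exact Set.mem_iUnion₂.mpr ⟨d, Or.inl hd, hxd⟩
    · obtain ⟨d, hd, hxd⟩ := Set.mem_iUnion₂.mp (hcovB hx)
      exact Set.mem_iUnion₂.mpr ⟨d, Or.inr hd, hxd⟩
  · -- minimality
    intro L' hL'ss hL'
    obtain ⟨b, hbU, hbL'⟩ := Set.exists_of_ssubset hL'ss
    have hL'1 : IsLimitSet v X₁ a L' :=
      isLimitSet_mono v Set.subset_union_left hL'
    have hL'2 : IsLimitSet v X₂ a L' :=
      isLimitSet_mono v Set.subset_union_right hL'
    rcases hbU with hb | hb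
    · exact aux_contradiction v hadd hneg X₁ a L₁ L₂ L' h₂closed h₁iso h₂iso
        h₁ h₁min hL'1 hL'ss.subset b hb hbL'
    · exact aux_contradiction v hadd hneg X₂ a L₂ L₁ L' h₁closed h₂iso h₁iso
        h₂ h₂min hL'2 (by rw [Set.union_comm]; exact hL'ss.subset) b hb hbL'
  · letI := valTopology v m
    exact h₁closed.union h₂closed
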